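/- As formal power series, Σ_{k≥0} z^{2k} M(z)^{2k+1} · √(1-2z-3z²) = 1, where M(z) is the Motzkin generating function; equivalently, the square of the Grand Motzkin generating function G(z) = Σ_{k≥0} z^{2k} M(z)^{2k+1} satisfies G(z)² · (1 - 2z - 3z²) = 1. -/

import Mathlib

open PowerSeries

/-- The Grand Motzkin generating function G = Σ_{k≥0} z^{2k} M^{2k+1}
satisfies G² · (1 - 2z - 3z²) = 1. -/
theorem grand_motzkin_gf_sq
    (M G : PowerSeries ℚ)
    (hM0 : constantCoeff M = 1)
    (hM : M = 1 + X * M + X ^ 2 * M ^ 2)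
    (hG : ∀ n : ℕ, (coeff n) G
      = ∑ k ∈ Finset.range (n + 1), (coeff n) (X ^ (2 * k) * M ^ (2 * k + 1))) :
    G ^ 2 * (1 - 2 * X - 3 * X ^ 2) = 1 := by
  -- vanishing of low coefficients of the terms
  have hvan : ∀ (j k : ℕ), j < 2 * k →
      (coeff j) (X ^ (2 * k) * M ^ (2 * k + 1)) = 0 := by
    intro j k hjk
    have hdvd : (X : PowerSeries ℚ) ^ (2 * k) ∣ X ^ (2 * k) * M ^ (2 * k + 1) :=
      dvd_mul_right _ _
    exact (PowerSeries.X_pow_dvd_iff.mp hdvd) j hjk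
  -- partial sums
  set P : ℕ → PowerSeries ℚ :=
    fun n => ∑ k ∈ Finset.range (n + 1), X ^ (2 * k) * M ^ (2 * k + 1) with hP
  have hA : ∀ n j : ℕ, j ≤ n → (coeff j) G = (coeff j) (P n) := by
    intro n j hjn
    rw [hP]
    simp only [map_sum]
    rw [hG j]
    apply Finset.sum_subset
    · exact Finset.range_subset_range.mpr (by omega)
    · intro k hk hk'
      simp only [Finset.mem_range] at hk hk'
      exact hvan j k (by omega)
  -- geometric sum identity
  have hgeom : ∀ n : ℕ, (1 - X ^ 2 * M ^ 2) * P n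
      = M - X ^ (2 * (n + 1)) * M ^ (2 * (n + 1) + 1) := by
    intro n
    rw [hP]
    have h1 : ∀ k : ℕ, (X : PowerSeries ℚ) ^ (2 * k) * M ^ (2 * k + 1)
        = (X ^ 2 * M ^ 2) ^ k * M := by
      intro k
      rw [mul_pow, ← pow_mul, ← pow_mul, mul_assoc, ← pow_succ]
    simp only [h1]
    rw [← Finset.sum_mul, ← mul_assoc]
    have := geom_sum_mul (X ^ 2 * M ^ 2 : PowerSeries ℚ) (n + 1)
    -- (∑ i in range (n+1), x^i) * (x - 1) = x^(n+1) - 1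
    linear_combination (-(M : PowerSeries ℚ)) * this
  -- key: (1 - X^2 M^2) * G = M
  have hkey : (1 - X ^ 2 * M ^ 2) * G = M := by
    ext n
    rw [PowerSeries.coeff_mul]
    have : ∑ p ∈ Finset.HasAntidiagonal.antidiagonal n,
        (coeff p.1) (1 - X ^ 2 * M ^ 2) * (coeff p.2) G
        = ∑ p ∈ Finset.HasAntidiagonal.antidiagonal n,
        (coeff p.1) (1 - X ^ 2 * M ^ 2) * (coeff p.2) (P n) := by
      apply Finset.sum_congr rfl
      intro p hp
      rw [Finset.HasAntidiagonal.mem_antidiagonal] at hp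
      rw [hA n p.2 (by omega)]
    rw [this, ← PowerSeries.coeff_mul, hgeom n, map_sub,
      hvan n (n + 1) (by omega), sub_zero]
  have h1 : (2 - M + X * M) * G = M := by
    linear_combination hkey - G * hM
  have hsq : (2 - M + X * M) ^ 2 = M ^ 2 * (1 - 2 * X - 3 * X ^ 2) := by
    linear_combination (-4 : PowerSeries ℚ) * hM
  have h3 : M ^ 2 * (G ^ 2 * (1 - 2 * X - 3 * X ^ 2)) = M ^ 2 * 1 := by
    linear_combination (-(G ^ 2)) * hsq + ((2 - M + X * M) * G + M) * h1
  have hMne : (M : PowerSeries ℚ) ≠ 0 := by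
    intro h
    rw [h] at hM0
    simp at hM0
  exact mul_left_cancel₀ (pow_ne_zero 2 hMne) h3
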